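/- arXiv:1510.01271 — 5 statements merged into one kernel-verified Lean document; each statement's English description precedes it below -/
import Mathlib

section
/- Let G₁ and G₂ be finite simple graphs with vertex sets V₁, V₂. If G₁ is r₁-regular and G₂ is r₂-regular, then: if r₁ + |V₂| = r₂ + |V₁|, the join G₁ + G₂ is regular and cn(G₁+G₂) = |V₁| + |V₂|; otherwise cn(G₁+G₂) = max{|V₁|, |V₂|}. -/
open scoped Classical

/-- Number of vertices of `G` having degree `d`. -/
noncomputable def degCount {V : Type*} [Fintype V] (G : SimpleGraph V) (d : ℕ) : ℕ :=
  (Finset.univ.filter (fun v => G.degree v = d)).card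

/-- The curling number of a graph: the maximal multiplicity of a degree value. -/
noncomputable def curl {V : Type*} [Fintype V] (G : SimpleGraph V) : ℕ :=
  (Finset.univ.image (fun v => G.degree v)).sup (degCount G)

/-- The compound curling number: product of multiplicities of the distinct degree values. -/
noncomputable def curlc {V : Type*} [Fintype V] (G : SimpleGraph V) : ℕ :=
  ∏ d ∈ Finset.univ.image (fun v => G.degree v), degCount G d

/-- The join of two graphs. -/
def graphJoin {V W : Type*} (G : SimpleGraph V) (H : SimpleGraph W) : SimpleGraph (V ⊕ W) where
  Adj x y := match x, y with
    | .inl a, .inl b => G.Adj a b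
    | .inr a, .inr b => H.Adj a b
    | .inl _, .inr _ => True
    | .inr _, .inl _ => True
  symm := by
    constructor
    rintro (a | a) (b | b) h
    · exact G.adj_symm h
    · exact trivial
    · exact trivial
    · exact H.adj_symm h
  loopless := by
    constructor
    rintro (a | a) h
    · exact G.irrefl h
    · exact H.irrefl h

noncomputable def eNbrInl {V W : Type*} [Fintype V] [Fintype W] (G : SimpleGraph V)
    (H : SimpleGraph W) (a : V) :
    (graphJoin G H).neighborSet (Sum.inl a) ≃ (G.neighborSet a) ⊕ W where
  toFun := fun x => match x with
    | ⟨.inl b, h⟩ => .inl ⟨b, h⟩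
    | ⟨.inr c, _⟩ => .inr c
  invFun := fun x => match x with
    | .inl ⟨b, h⟩ => ⟨.inl b, h⟩
    | .inr c => ⟨.inr c, trivial⟩
  left_inv := by rintro ⟨(b|c), h⟩ <;> rfl
  right_inv := by rintro (⟨b,h⟩|c) <;> rfl

noncomputable def eNbrInr {V W : Type*} [Fintype V] [Fintype W] (G : SimpleGraph V)
    (H : SimpleGraph W) (b : W) :
    (graphJoin G H).neighborSet (Sum.inr b) ≃ (H.neighborSet b) ⊕ V where
  toFun := fun x => match x with
    | ⟨.inr c, h⟩ => .inl ⟨c, h⟩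
    | ⟨.inl a, _⟩ => .inr a
  invFun := fun x => match x with
    | .inl ⟨c, h⟩ => ⟨.inr c, h⟩
    | .inr a => ⟨.inl a, trivial⟩
  left_inv := by rintro ⟨(a|c), h⟩ <;> rfl
  right_inv := by rintro (⟨c,h⟩|a) <;> rfl

lemma deg_inl {V W : Type*} [Fintype V] [Fintype W] (G : SimpleGraph V) (H : SimpleGraph W)
    (a : V) : (graphJoin G H).degree (Sum.inl a) = G.degree a + Fintype.card W := by
  rw [← SimpleGraph.card_neighborSet_eq_degree, ← SimpleGraph.card_neighborSet_eq_degree,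
    Fintype.card_congr (eNbrInl G H a), Fintype.card_sum]

lemma deg_inr {V W : Type*} [Fintype V] [Fintype W] (G : SimpleGraph V) (H : SimpleGraph W)
    (b : W) : (graphJoin G H).degree (Sum.inr b) = H.degree b + Fintype.card V := by
  rw [← SimpleGraph.card_neighborSet_eq_degree, ← SimpleGraph.card_neighborSet_eq_degree,
    Fintype.card_congr (eNbrInr G H b), Fintype.card_sum]

lemma curl_of_regular {V : Type*} [Fintype V] (G : SimpleGraph V) (r : ℕ)
    (h : G.IsRegularOfDegree r) : curl G = Fintype.card V := by
  rcases isEmpty_or_nonempty V with hV | hV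
  · simp [curl, Fintype.card_eq_zero]
  · have himg : Finset.univ.image (fun v => G.degree v) = {r} := by
      ext d
      simp only [Finset.mem_image, Finset.mem_univ, true_and, Finset.mem_singleton]
      constructor
      · rintro ⟨v, rfl⟩; exact h v
      · rintro rfl; exact ⟨Classical.arbitrary V, h _⟩
    have hcnt : degCount G r = Fintype.card V := by
      unfold degCount
      rw [Finset.filter_true_of_mem (fun v _ => h v), Finset.card_univ]
    rw [curl, himg, Finset.sup_singleton, hcnt]

theorem stmt5 {V₁ V₂ : Type*} [Fintype V₁] [Fintype V₂]
    (G₁ : SimpleGraph V₁) (G₂ : SimpleGraph V₂) (r₁ r₂ : ℕ)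
    (h₁ : G₁.IsRegularOfDegree r₁) (h₂ : G₂.IsRegularOfDegree r₂) :
    (r₁ + Fintype.card V₂ = r₂ + Fintype.card V₁ →
      (∃ r, (graphJoin G₁ G₂).IsRegularOfDegree r) ∧
      curl (graphJoin G₁ G₂) = Fintype.card V₁ + Fintype.card V₂) ∧
    (r₁ + Fintype.card V₂ ≠ r₂ + Fintype.card V₁ →
      curl (graphJoin G₁ G₂) = max (Fintype.card V₁) (Fintype.card V₂)) := by
  set J := graphJoin G₁ G₂ with hJ
  have hdl : ∀ a : V₁, J.degree (Sum.inl a) = r₁ + Fintype.card V₂ := fun a => by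
    rw [hJ, deg_inl, h₁ a]
  have hdr : ∀ b : V₂, J.degree (Sum.inr b) = r₂ + Fintype.card V₁ := fun b => by
    rw [hJ, deg_inr, h₂ b]
  constructor
  · intro heq
    have hreg : J.IsRegularOfDegree (r₁ + Fintype.card V₂) := by
      rintro (a | b)
      · exact hdl a
      · rw [hdr b, heq]
    refine ⟨⟨_, hreg⟩, ?_⟩
    rw [curl_of_regular J _ hreg, Fintype.card_sum]
  · intro hne
    have hc1 : degCount J (r₁ + Fintype.card V₂) = Fintype.card V₁ := by
      unfold degCount
      have : Finset.univ.filter (fun v => J.degree v = r₁ + Fintype.card V₂) =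
          Finset.univ.image Sum.inl := by
        ext x
        rcases x with a | b
        · simp [hdl a]
        · simp [hdr b, Ne.symm hne]
      rw [this, Finset.card_image_of_injective _ Sum.inl_injective, Finset.card_univ]
    have hc2 : degCount J (r₂ + Fintype.card V₁) = Fintype.card V₂ := by
      unfold degCount
      have : Finset.univ.filter (fun v => J.degree v = r₂ + Fintype.card V₁) =
          Finset.univ.image Sum.inr := by
        ext x
        rcases x with a | b
        · simp [hdl a, hne]
        · simp [hdr b]
      rw [this, Finset.card_image_of_injective _ Sum.inr_injective, Finset.card_univ]
    apply le_antisymm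
    · apply Finset.sup_le
      intro d hd
      rw [Finset.mem_image] at hd
      obtain ⟨x, -, hx⟩ := hd
      rcases x with a | b
      · rw [← hx, hdl a, hc1]; exact le_max_left _ _
      · rw [← hx, hdr b, hc2]; exact le_max_right _ _
    · rw [max_le_iff]
      constructor
      · rcases isEmpty_or_nonempty V₁ with hV | hV
        · simp [Fintype.card_eq_zero]
        · have hmem : r₁ + Fintype.card V₂ ∈ Finset.univ.image (fun v => J.degree v) := by
            rw [Finset.mem_image]
            exact ⟨Sum.inl (Classical.arbitrary V₁), Finset.mem_univ _, hdl _⟩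
          calc Fintype.card V₁ = degCount J (r₁ + Fintype.card V₂) := hc1.symm
            _ ≤ _ := Finset.le_sup hmem
      · rcases isEmpty_or_nonempty V₂ with hV | hV
        · simp [Fintype.card_eq_zero]
        · have hmem : r₂ + Fintype.card V₁ ∈ Finset.univ.image (fun v => J.degree v) := by
            rw [Finset.mem_image]
            exact ⟨Sum.inr (Classical.arbitrary V₂), Finset.mem_univ _, hdr _⟩
          calc Fintype.card V₂ = degCount J (r₂ + Fintype.card V₁) := hc2.symm
            _ ≤ _ := Finset.le_sup hmem
end

section
/- For m, n ≥ 3, the planar grid graph P_m □ P_n has exactly (m−2)(n−2) vertices of degree 4, exactly 2(m+n−4) vertices of degree 3, and exactly 4 vertices of degree 2; hence cn(P_m □ P_n) = max{2(m+n−4), (m−2)(n−2)} and cn^c(P_m □ P_n) = 8(m−2)(n−2)(m+n−4). -/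
open scoped Classical

lemma deg_irrel {V : Type*} (G : SimpleGraph V) (v : V) (i1 : Fintype (G.neighborSet v))
    [Fintype (G.neighborSet v)] : @SimpleGraph.degree V G v i1 = G.degree v := by
  congr!

lemma path_deg (m : ℕ) (hm : 3 ≤ m) (i : Fin m) :
    (SimpleGraph.pathGraph m).degree i = if (i : ℕ) = 0 ∨ (i : ℕ) = m - 1 then 1 else 2 := by
  classical
  rw [SimpleGraph.degree, SimpleGraph.neighborFinset_eq_filter]
  have hi := i.isLt
  by_cases h0 : (i : ℕ) = 0
  · have hfil : (Finset.univ.filter ((SimpleGraph.pathGraph m).Adj i)) =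
        {(⟨1, by omega⟩ : Fin m)} := by
      ext u
      simp only [Finset.mem_filter, Finset.mem_univ, true_and, Finset.mem_singleton,
        SimpleGraph.pathGraph_adj, Fin.ext_iff]
      omega
    rw [hfil]
    simp [h0]
  · by_cases h1 : (i : ℕ) = m - 1
    · have hfil : (Finset.univ.filter ((SimpleGraph.pathGraph m).Adj i)) =
          {(⟨m - 2, by omega⟩ : Fin m)} := by
        ext u
        have hu := u.isLt
        simp only [Finset.mem_filter, Finset.mem_univ, true_and, Finset.mem_singleton,
          SimpleGraph.pathGraph_adj, Fin.ext_iff]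
        omega
      rw [hfil]
      simp [h0, h1]
    · have hfil : (Finset.univ.filter ((SimpleGraph.pathGraph m).Adj i)) =
          {(⟨(i : ℕ) - 1, by omega⟩ : Fin m), (⟨(i : ℕ) + 1, by omega⟩ : Fin m)} := by
        ext u
        have hu := u.isLt
        simp only [Finset.mem_filter, Finset.mem_univ, true_and, Finset.mem_insert,
          Finset.mem_singleton, SimpleGraph.pathGraph_adj, Fin.ext_iff]
        omega
      rw [hfil]
      rw [Finset.card_pair (by simp only [ne_eq, Fin.mk.injEq]; omega)]
      simp [h0, h1]

theorem stmt9 (m n : ℕ) (hm : 3 ≤ m) (hn : 3 ≤ n) :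
    degCount ((SimpleGraph.pathGraph m).boxProd (SimpleGraph.pathGraph n)) 4 = (m - 2) * (n - 2) ∧
    degCount ((SimpleGraph.pathGraph m).boxProd (SimpleGraph.pathGraph n)) 3 = 2 * (m + n - 4) ∧
    degCount ((SimpleGraph.pathGraph m).boxProd (SimpleGraph.pathGraph n)) 2 = 4 ∧
    curl ((SimpleGraph.pathGraph m).boxProd (SimpleGraph.pathGraph n)) =
      max (2 * (m + n - 4)) ((m - 2) * (n - 2)) ∧
    curlc ((SimpleGraph.pathGraph m).boxProd (SimpleGraph.pathGraph n)) =
      8 * (m - 2) * (n - 2) * (m + n - 4) := by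
  set G := (SimpleGraph.pathGraph m).boxProd (SimpleGraph.pathGraph n) with hG
  have hdeg : ∀ v : Fin m × Fin n, G.degree v =
      (if (v.1 : ℕ) = 0 ∨ (v.1 : ℕ) = m - 1 then 1 else 2) +
      (if (v.2 : ℕ) = 0 ∨ (v.2 : ℕ) = n - 1 then 1 else 2) := by
    intro v
    show ((SimpleGraph.pathGraph m).boxProd (SimpleGraph.pathGraph n)).degree v = _
    rw [SimpleGraph.degree_boxProd, path_deg m hm, path_deg n hn]
  have hcnt : ∀ d : ℕ, degCount G d =
      (Finset.univ.filter (fun v : Fin m × Fin n =>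
        ((if (v.1 : ℕ) = 0 ∨ (v.1 : ℕ) = m - 1 then 1 else 2) +
         (if (v.2 : ℕ) = 0 ∨ (v.2 : ℕ) = n - 1 then 1 else 2) : ℕ) = d)).card := by
    intro d
    rw [degCount]
    congr 1
    refine Finset.filter_congr fun v _ => ?_
    rw [deg_irrel, hdeg v]
  -- cardinalities of boundary/interior index sets
  have cardE : ∀ k : ℕ, 3 ≤ k →
      (Finset.univ.filter (fun i : Fin k => (i : ℕ) = 0 ∨ (i : ℕ) = k - 1)).card = 2 := by
    intro k hk
    have : (Finset.univ.filter (fun i : Fin k => (i : ℕ) = 0 ∨ (i : ℕ) = k - 1)) =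
        {(⟨0, by omega⟩ : Fin k), (⟨k - 1, by omega⟩ : Fin k)} := by
      ext u
      simp only [Finset.mem_filter, Finset.mem_univ, true_and, Finset.mem_insert,
        Finset.mem_singleton, Fin.ext_iff]
    rw [this, Finset.card_pair (by simp only [ne_eq, Fin.mk.injEq]; omega)]
  have cardI : ∀ k : ℕ, 3 ≤ k →
      (Finset.univ.filter (fun i : Fin k => ¬((i : ℕ) = 0 ∨ (i : ℕ) = k - 1))).card = k - 2 := by
    intro k hk
    have h := Finset.card_filter_add_card_filter_not
      (s := (Finset.univ : Finset (Fin k)))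
      (p := fun i : Fin k => (i : ℕ) = 0 ∨ (i : ℕ) = k - 1)
    rw [cardE k hk] at h
    simp only [Finset.card_univ, Fintype.card_fin] at h
    omega
  -- degree 4 count
  have h4 : degCount G 4 = (m - 2) * (n - 2) := by
    rw [hcnt 4]
    have hset : (Finset.univ.filter (fun v : Fin m × Fin n =>
        ((if (v.1 : ℕ) = 0 ∨ (v.1 : ℕ) = m - 1 then 1 else 2) +
         (if (v.2 : ℕ) = 0 ∨ (v.2 : ℕ) = n - 1 then 1 else 2) : ℕ) = 4)) =
        (Finset.univ.filter (fun i : Fin m => ¬((i : ℕ) = 0 ∨ (i : ℕ) = m - 1))) ×ˢ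
        (Finset.univ.filter (fun j : Fin n => ¬((j : ℕ) = 0 ∨ (j : ℕ) = n - 1))) := by
      ext v
      simp only [Finset.mem_filter, Finset.mem_univ, true_and, Finset.mem_product]
      split_ifs <;> omega
    rw [hset, Finset.card_product, cardI m hm, cardI n hn]
  -- degree 3 count
  have h3 : degCount G 3 = 2 * (m + n - 4) := by
    rw [hcnt 3]
    have hset : (Finset.univ.filter (fun v : Fin m × Fin n =>
        ((if (v.1 : ℕ) = 0 ∨ (v.1 : ℕ) = m - 1 then 1 else 2) +
         (if (v.2 : ℕ) = 0 ∨ (v.2 : ℕ) = n - 1 then 1 else 2) : ℕ) = 3)) =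
        ((Finset.univ.filter (fun i : Fin m => (i : ℕ) = 0 ∨ (i : ℕ) = m - 1)) ×ˢ
         (Finset.univ.filter (fun j : Fin n => ¬((j : ℕ) = 0 ∨ (j : ℕ) = n - 1)))) ∪
        ((Finset.univ.filter (fun i : Fin m => ¬((i : ℕ) = 0 ∨ (i : ℕ) = m - 1))) ×ˢ
         (Finset.univ.filter (fun j : Fin n => (j : ℕ) = 0 ∨ (j : ℕ) = n - 1))) := by
      ext v
      simp only [Finset.mem_filter, Finset.mem_univ, true_and, Finset.mem_product,
        Finset.mem_union]
      split_ifs <;> omega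
    have hdisj : Disjoint
        ((Finset.univ.filter (fun i : Fin m => (i : ℕ) = 0 ∨ (i : ℕ) = m - 1)) ×ˢ
         (Finset.univ.filter (fun j : Fin n => ¬((j : ℕ) = 0 ∨ (j : ℕ) = n - 1))))
        ((Finset.univ.filter (fun i : Fin m => ¬((i : ℕ) = 0 ∨ (i : ℕ) = m - 1))) ×ˢ
         (Finset.univ.filter (fun j : Fin n => (j : ℕ) = 0 ∨ (j : ℕ) = n - 1))) := by
      rw [Finset.disjoint_left]
      intro v hv hv2
      simp only [Finset.mem_product, Finset.mem_filter, Finset.mem_univ, true_and] at hv hv2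
      tauto
    rw [hset, Finset.card_union_of_disjoint hdisj, Finset.card_product,
      Finset.card_product, cardE m hm, cardE n hn, cardI m hm, cardI n hn]
    omega
  -- degree 2 count
  have h2 : degCount G 2 = 4 := by
    rw [hcnt 2]
    have hset : (Finset.univ.filter (fun v : Fin m × Fin n =>
        ((if (v.1 : ℕ) = 0 ∨ (v.1 : ℕ) = m - 1 then 1 else 2) +
         (if (v.2 : ℕ) = 0 ∨ (v.2 : ℕ) = n - 1 then 1 else 2) : ℕ) = 2)) =
        (Finset.univ.filter (fun i : Fin m => (i : ℕ) = 0 ∨ (i : ℕ) = m - 1)) ×ˢ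
        (Finset.univ.filter (fun j : Fin n => (j : ℕ) = 0 ∨ (j : ℕ) = n - 1)) := by
      ext v
      simp only [Finset.mem_filter, Finset.mem_univ, true_and, Finset.mem_product]
      split_ifs <;> omega
    rw [hset, Finset.card_product, cardE m hm, cardE n hn]
  -- image of degrees
  have himg : Finset.univ.image (fun v : Fin m × Fin n =>
      ((if (v.1 : ℕ) = 0 ∨ (v.1 : ℕ) = m - 1 then 1 else 2) +
       (if (v.2 : ℕ) = 0 ∨ (v.2 : ℕ) = n - 1 then 1 else 2) : ℕ)) = ({2, 3, 4} : Finset ℕ) := by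
    apply Finset.Subset.antisymm
    · intro d hd
      simp only [Finset.mem_image, Finset.mem_univ, true_and] at hd
      obtain ⟨v, rfl⟩ := hd
      simp only [Finset.mem_insert, Finset.mem_singleton]
      split_ifs <;> omega
    · intro d hd
      simp only [Finset.mem_insert, Finset.mem_singleton] at hd
      simp only [Finset.mem_image, Finset.mem_univ, true_and]
      rcases hd with rfl | rfl | rfl
      · refine ⟨(⟨0, by omega⟩, ⟨0, by omega⟩), ?_⟩
        simp only [Fin.val_mk, eq_self_iff_true, true_or, if_true, one_ne_zero, false_or]
        all_goals split_ifs <;> omega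
      · refine ⟨(⟨0, by omega⟩, ⟨1, by omega⟩), ?_⟩
        simp only [Fin.val_mk, eq_self_iff_true, true_or, if_true, one_ne_zero, false_or]
        all_goals split_ifs <;> omega
      · refine ⟨(⟨1, by omega⟩, ⟨1, by omega⟩), ?_⟩
        simp only [Fin.val_mk, eq_self_iff_true, true_or, if_true, one_ne_zero, false_or]
        all_goals split_ifs <;> omega
  have himgC : ∀ (f : Fin m × Fin n → ℕ), (∀ v, f v = G.degree v) →
      Finset.univ.image f = ({2, 3, 4} : Finset ℕ) := by
    intro f hf
    rw [← himg]
    exact Finset.image_congr fun v _ => by rw [hf v, hdeg v]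
  refine ⟨h4, h3, h2, ?_, ?_⟩
  · rw [curl]
    have key : (({2, 3, 4} : Finset ℕ)).sup (degCount G) =
        max (2 * (m + n - 4)) ((m - 2) * (n - 2)) := by
      rw [Finset.sup_insert, Finset.sup_insert, Finset.sup_singleton, h2, h3, h4]
      have hk : 4 ≤ 2 * (m + n - 4) := by omega
      rw [← max_assoc, max_eq_right hk]
    refine Eq.trans (congrArg (fun s : Finset ℕ => s.sup (degCount G)) ?_) key
    exact himgC _ fun v => by rw [deg_irrel]
  · rw [curlc]
    have key : ∏ d ∈ ({2, 3, 4} : Finset ℕ), degCount G d =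
        8 * (m - 2) * (n - 2) * (m + n - 4) := by
      rw [Finset.prod_insert (by decide), Finset.prod_insert (by decide),
        Finset.prod_singleton, h2, h3, h4]
      ring
    refine Eq.trans (congrArg (fun s : Finset ℕ => ∏ d ∈ s, degCount G d) ?_) key
    exact himgC _ fun v => by rw [deg_irrel]
end

section
/- If G₁ is a k-regular graph on m vertices and G₂ is any finite graph, then cn(G₁ □ G₂) = m · cn(G₂). -/
open scoped Classical

theorem stmt14 {V₁ V₂ : Type*} [Fintype V₁] [Fintype V₂]
    (G₁ : SimpleGraph V₁) (G₂ : SimpleGraph V₂) (k : ℕ)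
    (h₁ : G₁.IsRegularOfDegree k) :
    curl (G₁.boxProd G₂) = Fintype.card V₁ * curl G₂ := by
  cases isEmpty_or_nonempty V₁ with
  | inl h =>
    simp [curl, Finset.univ_eq_empty, Fintype.card_eq_zero]
  | inr h =>
    rw [curl, curl]
    unfold degCount
    unfold SimpleGraph.IsRegularOfDegree at h₁
    simp only [SimpleGraph.degree_boxProd, h₁]
    have himg : (Finset.univ.image fun x : V₁ × V₂ => k + G₂.degree x.2) =
        (Finset.univ.image fun v => G₂.degree v).image (fun d => k + d) := by
      ext d
      simp only [Finset.mem_image, Finset.mem_univ, true_and]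
      constructor
      · rintro ⟨x, hx⟩; exact ⟨G₂.degree x.2, ⟨x.2, rfl⟩, hx⟩
      · rintro ⟨n, ⟨v, hv⟩, hn⟩
        exact ⟨(Classical.arbitrary V₁, v), by rw [hv]; exact hn⟩
    rw [himg, Finset.sup_image]
    rw [Finset.comp_sup_eq_sup_comp (fun n => Fintype.card V₁ * n)
      (fun x y => mul_max_of_nonneg x y (Nat.zero_le _)) (mul_zero _)]
    apply Finset.sup_congr rfl
    intro d _
    show (Finset.univ.filter fun x : V₁ × V₂ => k + G₂.degree x.2 = k + d).card
      = Fintype.card V₁ * (Finset.univ.filter fun v => G₂.degree v = d).card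
    have : (Finset.univ.filter fun x : V₁ × V₂ => k + G₂.degree x.2 = k + d) =
        Finset.univ ×ˢ (Finset.univ.filter fun v => G₂.degree v = d) := by
      ext x
      simp [Finset.mem_product]
    rw [this, Finset.card_product, Finset.card_univ]
end

section
/- For m, n ≥ 3, the strong product P_m ⊠ P_n has exactly (m−2)(n−2) vertices of degree 8, exactly 2(m+n−4) vertices of degree 5, and exactly 4 vertices of degree 3; hence cn(P_m ⊠ P_n) = max{2(m+n−4), (m−2)(n−2)} and cn^c(P_m ⊠ P_n) = 8(m−2)(n−2)(m+n−4), which equals cn^c(P_m □ P_n). -/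
open scoped Classical

/-- The strong product of two graphs. -/
def strongProd {V W : Type*} (G : SimpleGraph V) (H : SimpleGraph W) : SimpleGraph (V × W) where
  Adj x y := x ≠ y ∧ (G.Adj x.1 y.1 ∨ x.1 = y.1) ∧ (H.Adj x.2 y.2 ∨ x.2 = y.2)
  symm := ⟨fun x y h => ⟨h.1.symm, h.2.1.imp (G.adj_symm) Eq.symm, h.2.2.imp (H.adj_symm) Eq.symm⟩⟩
  loopless := ⟨fun x h => h.1 rfl⟩

open Finset SimpleGraph

lemma path_degree {m : ℕ} (hm : 3 ≤ m) (i : Fin m) :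
    (SimpleGraph.pathGraph m).degree i = if i.val = 0 ∨ i.val = m - 1 then 1 else 2 := by
  rw [SimpleGraph.degree, neighborFinset_eq_filter]
  rcases eq_or_ne i.val 0 with h0 | h0
  · have : Finset.univ.filter (fun j => (pathGraph m).Adj i j) = {(⟨1, by omega⟩ : Fin m)} := by
      ext j; simp [pathGraph_adj, Fin.ext_iff]; omega
    rw [this]; simp [h0]
  rcases eq_or_ne i.val (m-1) with h1 | h1
  · have : Finset.univ.filter (fun j => (pathGraph m).Adj i j) = {(⟨m-2, by omega⟩ : Fin m)} := by
      ext j; simp [pathGraph_adj, Fin.ext_iff]; omega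
    rw [this]; simp [h1]
  · have hi := i.isLt
    have : Finset.univ.filter (fun j => (pathGraph m).Adj i j)
        = {(⟨i.val - 1, by omega⟩ : Fin m), ⟨i.val + 1, by omega⟩} := by
      ext j; simp [pathGraph_adj, Fin.ext_iff]; omega
    rw [this, Finset.card_insert_of_notMem
      (by simp only [Finset.mem_singleton, Fin.ext_iff]; omega)]
    simp [h0, h1]

lemma path_cnt1 {m : ℕ} (hm : 3 ≤ m) :
    (Finset.univ.filter fun i : Fin m => (SimpleGraph.pathGraph m).degree i = 1).card = 2 := by
  have : (Finset.univ.filter fun i : Fin m => (SimpleGraph.pathGraph m).degree i = 1)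
      = {(⟨0, by omega⟩ : Fin m), ⟨m-1, by omega⟩} := by
    ext i
    simp [path_degree hm, Fin.ext_iff]
    omega
  rw [this, Finset.card_insert_of_notMem (by simp [Fin.ext_iff]; omega)]
  simp

lemma path_cnt2 {m : ℕ} (hm : 3 ≤ m) :
    (Finset.univ.filter fun i : Fin m => (SimpleGraph.pathGraph m).degree i = 2).card = m - 2 := by
  have h : (Finset.univ.filter fun i : Fin m => (SimpleGraph.pathGraph m).degree i = 2)
      = Finset.univ \ (Finset.univ.filter fun i : Fin m => (SimpleGraph.pathGraph m).degree i = 1) := by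
    ext i
    simp [path_degree hm]
  rw [h, Finset.card_sdiff_of_subset (Finset.filter_subset _ _), path_cnt1 hm]
  simp

lemma path_deg_cases {m : ℕ} (hm : 3 ≤ m) (i : Fin m) :
    (SimpleGraph.pathGraph m).degree i = 1 ∨ (SimpleGraph.pathGraph m).degree i = 2 := by
  rw [path_degree hm]; split <;> simp

lemma strong_degree {V W : Type*} [Fintype V] [Fintype W] (G : SimpleGraph V) (H : SimpleGraph W)
    (x : V × W) :
    (strongProd G H).degree x = (G.degree x.1 + 1) * (H.degree x.2 + 1) - 1 := by
  rw [SimpleGraph.degree, neighborFinset_eq_filter]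
  have h : Finset.univ.filter (fun y => (strongProd G H).Adj x y)
      = ((insert x.1 (G.neighborFinset x.1)) ×ˢ (insert x.2 (H.neighborFinset x.2))).erase x := by
    ext ⟨c, d⟩
    simp only [Finset.mem_filter, Finset.mem_univ, true_and, Finset.mem_erase,
      Finset.mem_product, Finset.mem_insert, mem_neighborFinset, strongProd, ne_eq,
      Prod.ext_iff, not_and]
    aesop
  rw [h, Finset.card_erase_of_mem (by simp), Finset.card_product,
    Finset.card_insert_of_notMem (notMem_neighborFinset_self _ _),
    Finset.card_insert_of_notMem (notMem_neighborFinset_self _ _)]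
  rfl

lemma card_filter_prod {α β : Type*} [Fintype α] [Fintype β] (p : α → Prop) (q : β → Prop) :
    (Finset.univ.filter fun x : α × β => p x.1 ∧ q x.2).card
      = (Finset.univ.filter p).card * (Finset.univ.filter q).card := by
  rw [← Finset.card_product]
  congr 1
  ext ⟨a, b⟩
  simp

theorem stmt16 (m n : ℕ) (hm : 3 ≤ m) (hn : 3 ≤ n) :
    degCount (strongProd (SimpleGraph.pathGraph m) (SimpleGraph.pathGraph n)) 8
      = (m - 2) * (n - 2) ∧
    degCount (strongProd (SimpleGraph.pathGraph m) (SimpleGraph.pathGraph n)) 5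
      = 2 * (m + n - 4) ∧
    degCount (strongProd (SimpleGraph.pathGraph m) (SimpleGraph.pathGraph n)) 3 = 4 ∧
    curl (strongProd (SimpleGraph.pathGraph m) (SimpleGraph.pathGraph n)) =
      max (2 * (m + n - 4)) ((m - 2) * (n - 2)) ∧
    curlc (strongProd (SimpleGraph.pathGraph m) (SimpleGraph.pathGraph n)) =
      8 * (m - 2) * (n - 2) * (m + n - 4) ∧
    curlc (strongProd (SimpleGraph.pathGraph m) (SimpleGraph.pathGraph n)) =
      curlc ((SimpleGraph.pathGraph m).boxProd (SimpleGraph.pathGraph n)) := by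
  have hdm := path_deg_cases hm
  have hdn := path_deg_cases hn
  -- counts for the strong product
  have c8 : degCount (strongProd (SimpleGraph.pathGraph m) (SimpleGraph.pathGraph n)) 8
      = (m - 2) * (n - 2) := by
    rw [degCount]
    have e : Finset.univ.filter
        (fun x : Fin m × Fin n => (strongProd (pathGraph m) (pathGraph n)).degree x = 8)
        = (Finset.univ.filter fun i : Fin m => (SimpleGraph.pathGraph m).degree i = 2) ×ˢ (Finset.univ.filter fun j : Fin n => (SimpleGraph.pathGraph n).degree j = 2) := by
      ext x
      simp only [Finset.mem_filter, Finset.mem_product, Finset.mem_univ, true_and,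
        strong_degree]
      rcases hdm x.1 with h1 | h1 <;> rcases hdn x.2 with h2 | h2 <;> simp only [h1, h2] <;> norm_num
    rw [e, Finset.card_product, path_cnt2 hm, path_cnt2 hn]
  have c5 : degCount (strongProd (SimpleGraph.pathGraph m) (SimpleGraph.pathGraph n)) 5
      = 2 * (m + n - 4) := by
    rw [degCount]
    have e : Finset.univ.filter
        (fun x : Fin m × Fin n => (strongProd (pathGraph m) (pathGraph n)).degree x = 5)
        = ((Finset.univ.filter fun i : Fin m => (SimpleGraph.pathGraph m).degree i = 1) ×ˢ (Finset.univ.filter fun j : Fin n => (SimpleGraph.pathGraph n).degree j = 2)) ∪ ((Finset.univ.filter fun i : Fin m => (SimpleGraph.pathGraph m).degree i = 2) ×ˢ (Finset.univ.filter fun j : Fin n => (SimpleGraph.pathGraph n).degree j = 1)) := by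
      ext x
      simp only [Finset.mem_filter, Finset.mem_union,
        Finset.mem_product, Finset.mem_univ, true_and, strong_degree]
      rcases hdm x.1 with h1 | h1 <;> rcases hdn x.2 with h2 | h2 <;> simp only [h1, h2] <;> norm_num
    have hd : Disjoint ((Finset.univ.filter fun i : Fin m => (SimpleGraph.pathGraph m).degree i = 1) ×ˢ (Finset.univ.filter fun j : Fin n => (SimpleGraph.pathGraph n).degree j = 2)) ((Finset.univ.filter fun i : Fin m => (SimpleGraph.pathGraph m).degree i = 2) ×ˢ (Finset.univ.filter fun j : Fin n => (SimpleGraph.pathGraph n).degree j = 1)) := by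
      rw [Finset.disjoint_left]
      rintro x hx hy
      simp only [Finset.mem_filter, Finset.mem_product] at hx hy
      omega
    rw [e, Finset.card_union_of_disjoint hd, Finset.card_product, Finset.card_product,
      path_cnt1 hm, path_cnt2 hn, path_cnt2 hm, path_cnt1 hn]
    omega
  have c3 : degCount (strongProd (SimpleGraph.pathGraph m) (SimpleGraph.pathGraph n)) 3 = 4 := by
    rw [degCount]
    have e : Finset.univ.filter
        (fun x : Fin m × Fin n => (strongProd (pathGraph m) (pathGraph n)).degree x = 3)
        = (Finset.univ.filter fun i : Fin m => (SimpleGraph.pathGraph m).degree i = 1) ×ˢ (Finset.univ.filter fun j : Fin n => (SimpleGraph.pathGraph n).degree j = 1) := by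
      ext x
      simp only [Finset.mem_filter, Finset.mem_product, Finset.mem_univ, true_and,
        strong_degree]
      rcases hdm x.1 with h1 | h1 <;> rcases hdn x.2 with h2 | h2 <;> simp only [h1, h2] <;> norm_num
    rw [e, Finset.card_product, path_cnt1 hm, path_cnt1 hn]
  -- witnesses
  have w1m : (SimpleGraph.pathGraph m).degree ⟨0, by omega⟩ = 1 := by
    rw [path_degree hm]; simp
  have w1n : (SimpleGraph.pathGraph n).degree ⟨0, by omega⟩ = 1 := by
    rw [path_degree hn]; simp
  have w2m : (SimpleGraph.pathGraph m).degree ⟨1, by omega⟩ = 2 := by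
    rw [path_degree hm, if_neg (by simp; omega)]
  have w2n : (SimpleGraph.pathGraph n).degree ⟨1, by omega⟩ = 2 := by
    rw [path_degree hn, if_neg (by simp; omega)]
  have himg : Finset.univ.image
      (fun v => (strongProd (SimpleGraph.pathGraph m) (SimpleGraph.pathGraph n)).degree v)
      = ({3, 5, 8} : Finset ℕ) := by
    ext d
    simp only [Finset.mem_image, Finset.mem_univ, true_and, Finset.mem_insert,
      Finset.mem_singleton]
    constructor
    · rintro ⟨x, rfl⟩
      rw [strong_degree]
      rcases hdm x.1 with h1 | h1 <;> rcases hdn x.2 with h2 | h2 <;> rw [h1, h2] <;> simp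
    · rintro (rfl | rfl | rfl)
      · exact ⟨(⟨0, by omega⟩, ⟨0, by omega⟩), by simp [strong_degree, w1m, w1n]⟩
      · exact ⟨(⟨0, by omega⟩, ⟨1, by omega⟩), by simp [strong_degree, w1m, w2n]⟩
      · exact ⟨(⟨1, by omega⟩, ⟨1, by omega⟩), by simp [strong_degree, w2m, w2n]⟩
  have hcurl : curl (strongProd (SimpleGraph.pathGraph m) (SimpleGraph.pathGraph n))
      = max (2 * (m + n - 4)) ((m - 2) * (n - 2)) := by
    rw [curl, himg]
    rw [show ({3, 5, 8} : Finset ℕ) = insert 3 (insert 5 {8}) from rfl,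
      Finset.sup_insert, Finset.sup_insert, Finset.sup_singleton, c3, c5, c8]
    generalize (m - 2) * (n - 2) = k
    omega
  have hcurlc : curlc (strongProd (SimpleGraph.pathGraph m) (SimpleGraph.pathGraph n))
      = 8 * (m - 2) * (n - 2) * (m + n - 4) := by
    rw [curlc, himg]
    rw [show ({3, 5, 8} : Finset ℕ) = insert 3 (insert 5 {8}) from rfl,
      Finset.prod_insert (by decide), Finset.prod_insert (by decide),
      Finset.prod_singleton, c3, c5, c8]
    ring
  -- box product
  have b4 : degCount ((SimpleGraph.pathGraph m).boxProd (SimpleGraph.pathGraph n)) 4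
      = (m - 2) * (n - 2) := by
    rw [degCount]
    simp only [SimpleGraph.degree_boxProd]
    have e : Finset.univ.filter
        (fun x : Fin m × Fin n => (pathGraph m).degree x.1 + (pathGraph n).degree x.2 = 4)
        = (Finset.univ.filter fun i : Fin m => (SimpleGraph.pathGraph m).degree i = 2) ×ˢ (Finset.univ.filter fun j : Fin n => (SimpleGraph.pathGraph n).degree j = 2) := by
      ext x
      simp only [Finset.mem_filter, Finset.mem_product, Finset.mem_univ, true_and]
      rcases hdm x.1 with h1 | h1 <;> rcases hdn x.2 with h2 | h2 <;> simp only [h1, h2] <;> norm_num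
    rw [e, Finset.card_product, path_cnt2 hm, path_cnt2 hn]
  have b3 : degCount ((SimpleGraph.pathGraph m).boxProd (SimpleGraph.pathGraph n)) 3
      = 2 * (m + n - 4) := by
    rw [degCount]
    simp only [SimpleGraph.degree_boxProd]
    have e : Finset.univ.filter
        (fun x : Fin m × Fin n => (pathGraph m).degree x.1 + (pathGraph n).degree x.2 = 3)
        = ((Finset.univ.filter fun i : Fin m => (SimpleGraph.pathGraph m).degree i = 1) ×ˢ (Finset.univ.filter fun j : Fin n => (SimpleGraph.pathGraph n).degree j = 2)) ∪ ((Finset.univ.filter fun i : Fin m => (SimpleGraph.pathGraph m).degree i = 2) ×ˢ (Finset.univ.filter fun j : Fin n => (SimpleGraph.pathGraph n).degree j = 1)) := by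
      ext x
      simp only [Finset.mem_filter, Finset.mem_union,
        Finset.mem_product, Finset.mem_univ, true_and]
      rcases hdm x.1 with h1 | h1 <;> rcases hdn x.2 with h2 | h2 <;> simp only [h1, h2] <;> norm_num
    have hd : Disjoint ((Finset.univ.filter fun i : Fin m => (SimpleGraph.pathGraph m).degree i = 1) ×ˢ (Finset.univ.filter fun j : Fin n => (SimpleGraph.pathGraph n).degree j = 2)) ((Finset.univ.filter fun i : Fin m => (SimpleGraph.pathGraph m).degree i = 2) ×ˢ (Finset.univ.filter fun j : Fin n => (SimpleGraph.pathGraph n).degree j = 1)) := by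
      rw [Finset.disjoint_left]
      rintro x hx hy
      simp only [Finset.mem_filter, Finset.mem_product] at hx hy
      omega
    rw [e, Finset.card_union_of_disjoint hd, Finset.card_product, Finset.card_product,
      path_cnt1 hm, path_cnt2 hn, path_cnt2 hm, path_cnt1 hn]
    omega
  have b2 : degCount ((SimpleGraph.pathGraph m).boxProd (SimpleGraph.pathGraph n)) 2 = 4 := by
    rw [degCount]
    simp only [SimpleGraph.degree_boxProd]
    have e : Finset.univ.filter
        (fun x : Fin m × Fin n => (pathGraph m).degree x.1 + (pathGraph n).degree x.2 = 2)
        = (Finset.univ.filter fun i : Fin m => (SimpleGraph.pathGraph m).degree i = 1) ×ˢ (Finset.univ.filter fun j : Fin n => (SimpleGraph.pathGraph n).degree j = 1) := by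
      ext x
      simp only [Finset.mem_filter, Finset.mem_product, Finset.mem_univ, true_and]
      rcases hdm x.1 with h1 | h1 <;> rcases hdn x.2 with h2 | h2 <;> simp only [h1, h2] <;> norm_num
    rw [e, Finset.card_product, path_cnt1 hm, path_cnt1 hn]
  have hbox : curlc ((SimpleGraph.pathGraph m).boxProd (SimpleGraph.pathGraph n))
      = 8 * (m - 2) * (n - 2) * (m + n - 4) := by
    rw [curlc]
    simp only [SimpleGraph.degree_boxProd]
    have bimg : Finset.univ.image
        (fun v : Fin m × Fin n => (SimpleGraph.pathGraph m).degree v.1 + (SimpleGraph.pathGraph n).degree v.2)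
        = ({2, 3, 4} : Finset ℕ) := by
      ext d
      simp only [Finset.mem_image, Finset.mem_univ, true_and, Finset.mem_insert,
        Finset.mem_singleton]
      constructor
      · rintro ⟨x, rfl⟩
        rcases hdm x.1 with h1 | h1 <;> rcases hdn x.2 with h2 | h2 <;> rw [h1, h2] <;> simp
      · rintro (rfl | rfl | rfl)
        · exact ⟨(⟨0, by omega⟩, ⟨0, by omega⟩), by simp [w1m, w1n]⟩
        · exact ⟨(⟨0, by omega⟩, ⟨1, by omega⟩), by simp [w1m, w2n]⟩
        · exact ⟨(⟨1, by omega⟩, ⟨1, by omega⟩), by simp [w2m, w2n]⟩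
    rw [bimg]
    rw [show ({2, 3, 4} : Finset ℕ) = insert 2 (insert 3 {4}) from rfl,
      Finset.prod_insert (by decide), Finset.prod_insert (by decide),
      Finset.prod_singleton, b2, b3, b4]
    ring
  exact ⟨c8, c5, c3, hcurl, hcurlc, by rw [hcurlc, hbox]⟩
end

section
/- Let G₁(V₁,E₁) and G₂(V₂,E₂) be nonempty finite graphs, both r₁- and r₂-regular respectively. Then the corona G₁ ⊙ G₂ satisfies: cn(G₁ ⊙ G₂) = |V₁|(1+|V₂|) if r₁ + |V₂| = 1 + r₂, and cn(G₁ ⊙ G₂) = |V₁|·|V₂| otherwise. -/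
open scoped Classical

/-- The corona of two graphs: one copy of `G` and `|V|` copies of `H`, the `i`-th
vertex of `G` joined to every vertex of the `i`-th copy of `H`. -/
def corona {V W : Type*} (G : SimpleGraph V) (H : SimpleGraph W) : SimpleGraph (V ⊕ V × W) where
  Adj x y := match x, y with
    | .inl a, .inl b => G.Adj a b
    | .inr a, .inr b => a.1 = b.1 ∧ H.Adj a.2 b.2
    | .inl a, .inr b => a = b.1
    | .inr a, .inl b => b = a.1
  symm := by
    constructor
    rintro (a | a) (b | b) h
    · exact G.adj_symm h
    · exact h
    · exact h
    · exact ⟨h.1.symm, H.adj_symm h.2⟩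
  loopless := by
    constructor
    rintro (a | a) h
    · exact G.irrefl h
    · exact H.irrefl h.2

section coronaHelpers
variable {V W : Type*} [Fintype V] [Fintype W] (G : SimpleGraph V) (H : SimpleGraph W)

lemma corona_deg_inl (a : V) :
    (corona G H).degree (Sum.inl a) = G.degree a + Fintype.card W := by
  classical
  rw [← SimpleGraph.card_neighborFinset_eq_degree, ← SimpleGraph.card_neighborFinset_eq_degree,
    SimpleGraph.neighborFinset_eq_filter, SimpleGraph.neighborFinset_eq_filter,
    Finset.card_filter, Finset.card_filter, Fintype.sum_sum_type]
  simp only [corona, Fintype.sum_prod_type, Finset.sum_ite_eq]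
  have : ∀ x : V, (∑ _ : W, if a = x then (1:ℕ) else 0) = if a = x then Fintype.card W else 0 := by
    intro x; split <;> simp
  congr 1
  exact (Finset.sum_congr rfl (fun x _ => this x)).trans (by simp)

lemma corona_deg_inr (p : V × W) :
    (corona G H).degree (Sum.inr p) = H.degree p.2 + 1 := by
  classical
  rw [← SimpleGraph.card_neighborFinset_eq_degree, ← SimpleGraph.card_neighborFinset_eq_degree,
    SimpleGraph.neighborFinset_eq_filter, SimpleGraph.neighborFinset_eq_filter,
    Finset.card_filter, Finset.card_filter, Fintype.sum_sum_type]
  simp only [corona, Fintype.sum_prod_type, Finset.sum_ite_eq, eq_comm, add_comm]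
  congr 1
  · exact Eq.symm ((Finset.sum_congr rfl (fun x _ => if_congr (Q := x = p.1) Iff.rfl rfl rfl)).trans (by simp))
  · rw [Finset.sum_comm]
    simp [ite_and, Finset.sum_ite_eq']

end coronaHelpers

theorem stmt17 {V₁ V₂ : Type*} [Fintype V₁] [Fintype V₂]
    [Nonempty V₁] [Nonempty V₂]
    (G₁ : SimpleGraph V₁) (G₂ : SimpleGraph V₂) (r₁ r₂ : ℕ)
    (h₁ : G₁.IsRegularOfDegree r₁) (h₂ : G₂.IsRegularOfDegree r₂) :
    (r₁ + Fintype.card V₂ = 1 + r₂ →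
      curl (corona G₁ G₂) = Fintype.card V₁ * (1 + Fintype.card V₂)) ∧
    (r₁ + Fintype.card V₂ ≠ 1 + r₂ →
      curl (corona G₁ G₂) = Fintype.card V₁ * Fintype.card V₂) := by
  classical
  set n₁ := Fintype.card V₁
  set n₂ := Fintype.card V₂
  set d₁ := r₁ + n₂ with hd₁
  set d₂ := r₂ + 1 with hd₂
  have hdl : ∀ a, (corona G₁ G₂).degree (Sum.inl a) = d₁ := fun a => by
    rw [corona_deg_inl, h₁ a]
  have hdr : ∀ p, (corona G₁ G₂).degree (Sum.inr p) = d₂ := fun p => by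
    rw [corona_deg_inr, h₂ p.2]
  have hcount : ∀ d, degCount (corona G₁ G₂) d =
      (if d₁ = d then n₁ else 0) + (if d₂ = d then n₁ * n₂ else 0) := by
    intro d
    unfold degCount
    rw [Finset.card_filter, Fintype.sum_sum_type]
    simp only [hdl, hdr]
    by_cases e1 : d₁ = d <;> by_cases e2 : d₂ = d <;>
      simp [e1, e2, Finset.card_univ, n₁, n₂]
  have himg : Finset.univ.image (fun v => (corona G₁ G₂).degree v) = {d₁, d₂} := by
    ext d
    simp only [Finset.mem_image, Finset.mem_insert, Finset.mem_singleton, Finset.mem_univ,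
      true_and]
    constructor
    · rintro ⟨(a | p), rfl⟩
      · exact Or.inl (hdl a)
      · exact Or.inr (hdr p)
    · rintro (rfl | rfl)
      · exact ⟨Sum.inl (Classical.arbitrary V₁), hdl _⟩
      · exact ⟨Sum.inr (Classical.arbitrary V₁, Classical.arbitrary V₂), hdr _⟩
  have hn₂ : 1 ≤ n₂ := Fintype.card_pos
  constructor
  · intro h
    have hdd : d₁ = d₂ := by omega
    rw [curl, himg, hdd, Finset.insert_eq_self.mpr (Finset.mem_singleton_self _),
      Finset.sup_singleton, hcount]
    simp [← hdd]
    ring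
  · intro h
    have hdd : d₁ ≠ d₂ := by omega
    rw [curl, himg, Finset.sup_insert, Finset.sup_singleton, hcount, hcount]
    simp [hdd, Ne.symm hdd]
    have : n₁ ≤ n₁ * n₂ := Nat.le_mul_of_pos_right _ hn₂
    omega
end
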